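/- Let q be a prime power, n ≥ 2, and φ ∈ GL_n(𝔽_q) not a scalar multiple of the identity. Then the number of lines through the origin ℓ ⊆ 𝔽_q^n with ℓ ∩ H₀ = {0} that are fixed by φ (i.e., φ(ℓ) = ℓ) is at most q^{n-2} + 1. -/

import Mathlib

open Module

private lemma stmt14_pow_add_pow_le (q a b : ℕ) (hq : 1 ≤ q) :
    q ^ a + q ^ b ≤ q ^ (a + b) + 1 := by
  have ha : 1 ≤ q ^ a := Nat.one_le_pow _ _ hq
  have hb : 1 ≤ q ^ b := Nat.one_le_pow _ _ hq
  rw [pow_add]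
  nlinarith

private lemma stmt14_sum_pow_le {α : Type*} (q : ℕ) (hq : 1 ≤ q) (e : α → ℕ)
    (T : Finset α) : (∑ i ∈ T, q ^ e i) + 1 ≤ q ^ (∑ i ∈ T, e i) + T.card := by
  classical
  induction T using Finset.induction_on with
  | empty => simp
  | @insert a T ha ih =>
    rw [Finset.sum_insert ha, Finset.sum_insert ha, Finset.card_insert_of_notMem ha]
    have := stmt14_pow_add_pow_le q (e a) (∑ i ∈ T, e i) hq
    omega

private lemma stmt14_pow_sub_add_le (q m j : ℕ) (hq : 2 ≤ q) (hj : j ≤ m) :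
    q ^ (m - j) + j ≤ q ^ m := by
  have h1 : j < q ^ j := Nat.lt_pow_self (by omega : 1 < q)
  have h2 : 1 ≤ q ^ (m - j) := Nat.one_le_pow _ _ (by omega)
  calc q ^ (m - j) + j ≤ q ^ (m - j) * (j + 1) := by nlinarith
    _ ≤ q ^ (m - j) * q ^ j := Nat.mul_le_mul_left _ (by omega)
    _ = q ^ m := by rw [← pow_add]; congr 1; omega

private lemma stmt14_comb {α : Type*} (q m : ℕ) (hq : 2 ≤ q) (T : Finset α) (e : α → ℕ)
    (he : ∀ i ∈ T, e i ≤ m) (hsum : (∑ i ∈ T, (e i + 1)) ≤ m + 2) :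
    (∑ i ∈ T, q ^ e i) ≤ q ^ m + 1 := by
  classical
  rcases Nat.lt_or_ge T.card 2 with hk | hk
  · have h01 : T.card = 0 ∨ T.card = 1 := by omega
    rcases h01 with h | h
    · rw [Finset.card_eq_zero.mp h]
      simp
    · obtain ⟨a, rfl⟩ := Finset.card_eq_one.mp h
      rw [Finset.sum_singleton]
      have : q ^ e a ≤ q ^ m :=
        Nat.pow_le_pow_right (by omega) (he a (Finset.mem_singleton_self a))
      omega
  · have hsum' : (∑ i ∈ T, e i) + T.card ≤ m + 2 := by
      rw [Finset.sum_add_distrib] at hsum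
      simpa using hsum
    set j := T.card - 2 with hjdef
    have hj : j ≤ m := by omega
    have hSig : (∑ i ∈ T, e i) ≤ m - j := by omega
    have B := stmt14_sum_pow_le q (by omega) e T
    have mono : q ^ (∑ i ∈ T, e i) ≤ q ^ (m - j) := Nat.pow_le_pow_right (by omega) hSig
    have C := stmt14_pow_sub_add_le q m j hq hj
    omega

private lemma stmt14_sum_finrank_eigenspace_le {F V : Type*} [Field F] [AddCommGroup V]
    [Module F V] [FiniteDimensional F V] (f : Module.End F V) (T : Finset F) :
    ∑ μ ∈ T, finrank F (f.eigenspace μ) ≤ finrank F V := by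
  classical
  have key : ∀ T : Finset F,
      ∑ μ ∈ T, finrank F (f.eigenspace μ) ≤ finrank F ↥(T.sup f.eigenspace) := by
    intro T
    induction T using Finset.induction_on with
    | empty => simp
    | @insert a T ha ih =>
      rw [Finset.sum_insert ha, Finset.sup_insert]
      have hdisj : Disjoint (f.eigenspace a) (T.sup f.eigenspace) := by
        refine (Module.End.eigenspaces_iSupIndep f a).mono_right ?_
        refine Finset.sup_le fun j hj => ?_
        exact le_iSup₂ (f := fun j (_ : j ≠ a) => f.eigenspace j) j
          (fun h => ha (h ▸ hj))
      have heq : finrank F (f.eigenspace a) + finrank F ↥(T.sup f.eigenspace)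
          = finrank F ↥(f.eigenspace a ⊔ T.sup f.eigenspace) := by
        rw [← Submodule.finrank_sup_add_finrank_inf_eq, hdisj.eq_bot, finrank_bot, add_zero]
      omega
  exact le_trans (key T) (Submodule.finrank_le _)

/-- a non-scalar `φ ∈ GL_n(𝔽_q)` fixes at most `q^(n-2) + 1` of the lines
through the origin that meet `H₀` only in `0`. -/
theorem stmt14 (F : Type*) [Field F] [Fintype F] (n : ℕ) (hn : 2 ≤ n)
    (φ : (Fin n → F) ≃ₗ[F] (Fin n → F))
    (hφ : ¬ ∃ lam : F, ∀ x, φ x = lam • x) :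
    Nat.card {ℓ : Submodule F (Fin n → F) //
      Module.finrank F ℓ = 1 ∧
      (ℓ : Set (Fin n → F)) ∩ {x | x ⟨n - 1, by omega⟩ = 0} = {0} ∧
      ℓ.map (φ : (Fin n → F) →ₗ[F] (Fin n → F)) = ℓ} ≤
    Fintype.card F ^ (n - 2) + 1 := by
  classical
  have hq : 2 ≤ Fintype.card F := Fintype.one_lt_card
  set i0 : Fin n := ⟨n - 1, by omega⟩ with hi0
  set f : Module.End F (Fin n → F) := (φ : (Fin n → F) →ₗ[F] (Fin n → F)) with hf
  have hfφ : ∀ x, f x = φ x := fun x => rfl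
  set S : Finset (Fin n → F) :=
    Finset.univ.filter (fun v => v i0 = 1 ∧ f v = (f v i0) • v) with hS
  have hfrtop : finrank F (Fin n → F) = n := Module.finrank_fin_fun F
  -- Step A : each fixed line gives a normalized eigenvector
  have key : ∀ ℓ : Submodule F (Fin n → F),
      Module.finrank F ℓ = 1 →
      (ℓ : Set (Fin n → F)) ∩ {x | x i0 = 0} = {0} →
      ℓ.map (φ : (Fin n → F) →ₗ[F] (Fin n → F)) = ℓ →
      ∃ v, v ∈ S ∧ ℓ = Submodule.span F {v} := by
    intro ℓ h1 h2 h3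
    have hbot : ℓ ≠ ⊥ := by
      intro h
      rw [h, finrank_bot] at h1
      omega
    obtain ⟨v, hv, hvne⟩ := Submodule.exists_mem_ne_zero_of_ne_bot hbot
    have hv0 : v i0 ≠ 0 := by
      intro h
      have hmem : v ∈ (ℓ : Set (Fin n → F)) ∩ {x | x i0 = 0} := ⟨hv, h⟩
      rw [h2] at hmem
      exact hvne hmem
    set u : Fin n → F := (v i0)⁻¹ • v with hu
    have hu0 : u i0 = 1 := by
      simp [hu, inv_mul_cancel₀ hv0]
    have humem : u ∈ ℓ := ℓ.smul_mem _ hv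
    have hune : u ≠ 0 := by
      intro h
      rw [h] at hu0
      simp at hu0
    have hle : Submodule.span F {u} ≤ ℓ := by
      rw [Submodule.span_le, Set.singleton_subset_iff]
      exact humem
    have hspan : Submodule.span F {u} = ℓ :=
      Submodule.eq_of_le_of_finrank_le hle
        (by rw [h1, finrank_span_singleton hune])
    have hφu : φ u ∈ ℓ := by
      rw [← h3]
      exact Submodule.mem_map_of_mem humem
    rw [← hspan] at hφu
    obtain ⟨c, hc⟩ := Submodule.mem_span_singleton.mp hφu
    have hci0 : f u i0 = c := by
      rw [hfφ, ← hc]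
      simp [hu0]
    refine ⟨u, ?_, hspan.symm⟩
    rw [hS, Finset.mem_filter]
    refine ⟨Finset.mem_univ _, hu0, ?_⟩
    rw [hci0, hfφ, ← hc]
  -- Step A': injection
  have stepA : Nat.card {ℓ : Submodule F (Fin n → F) //
      Module.finrank F ℓ = 1 ∧
      (ℓ : Set (Fin n → F)) ∩ {x | x i0 = 0} = {0} ∧
      ℓ.map (φ : (Fin n → F) →ₗ[F] (Fin n → F)) = ℓ} ≤ S.card := by
    rw [← Nat.card_eq_finsetCard S]
    refine Nat.card_le_card_of_injective
      (fun x => (⟨(key x.1 x.2.1 x.2.2.1 x.2.2.2).choose,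
        (key x.1 x.2.1 x.2.2.1 x.2.2.2).choose_spec.1⟩ : {v // v ∈ S})) ?_
    intro x y hxy
    apply Subtype.ext
    have hx := (key x.1 x.2.1 x.2.2.1 x.2.2.2).choose_spec.2
    have hy := (key y.1 y.2.1 y.2.2.1 y.2.2.2).choose_spec.2
    rw [hx, hy]
    exact congrArg (fun v => Submodule.span F {v}) (congrArg Subtype.val hxy)
  -- Step B : count S fiberwise by eigenvalue
  have hfib : S.card = ∑ μ ∈ Finset.univ,
      (S.filter fun v => f v i0 = μ).card :=
    Finset.card_eq_sum_card_fiberwise (fun v _ => Finset.mem_univ (f v i0))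
  set T : Finset F :=
    Finset.univ.filter (fun μ => (S.filter fun v => f v i0 = μ).Nonempty) with hT
  have hTsub : T ⊆ Finset.univ := Finset.subset_univ T
  have hzero : ∀ μ ∈ Finset.univ, μ ∉ T →
      (S.filter fun v => f v i0 = μ).card = 0 := by
    intro μ _ hμ
    rw [hT, Finset.mem_filter] at hμ
    push_neg at hμ
    rw [Finset.card_eq_zero, ← Finset.not_nonempty_iff_eq_empty]
    exact Finset.not_nonempty_iff_eq_empty.mpr (hμ (Finset.mem_univ μ))
  have hsumT : S.card = ∑ μ ∈ T, (S.filter fun v => f v i0 = μ).card := by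
    rw [hfib, Finset.sum_subset hTsub hzero]
  -- for μ ∈ T, compute the fiber cardinality and bounds
  obtain ⟨e, he⟩ : ∃ e : F → ℕ, ∀ μ : F, e μ =
      finrank F ↥(f.eigenspace μ ⊓ LinearMap.ker (LinearMap.proj (R := F) (φ := fun _ : Fin n => F) i0)) :=
    ⟨_, fun μ => rfl⟩
  have hKle : ∀ μ : F, (f.eigenspace μ ⊓ LinearMap.ker (LinearMap.proj (R := F) (φ := fun _ : Fin n => F) i0)) ≤ f.eigenspace μ :=
    fun μ => inf_le_left
  have hfiber : ∀ μ ∈ T,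
      (S.filter fun v => f v i0 = μ).card = Fintype.card F ^ e μ ∧
      e μ ≤ n - 2 ∧ e μ + 1 ≤ finrank F (f.eigenspace μ) := by
    intro μ hμ
    set K := f.eigenspace μ ⊓ LinearMap.ker (LinearMap.proj (R := F) (φ := fun _ : Fin n => F) i0) with hK
    rw [hT, Finset.mem_filter] at hμ
    obtain ⟨v₀, hv₀⟩ := hμ.2
    rw [Finset.mem_filter] at hv₀
    obtain ⟨hv₀S, hv₀μ⟩ := hv₀
    rw [hS, Finset.mem_filter] at hv₀S
    obtain ⟨-, hv₀1, hv₀eig⟩ := hv₀S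
    rw [hv₀μ] at hv₀eig
    -- fiber description
    have hfibdesc : ∀ v, (v ∈ S.filter fun v => f v i0 = μ) ↔ (v i0 = 1 ∧ f v = μ • v) := by
      intro v
      rw [Finset.mem_filter, hS, Finset.mem_filter]
      constructor
      · rintro ⟨⟨-, h1, h2⟩, h3⟩
        rw [h3] at h2
        exact ⟨h1, h2⟩
      · rintro ⟨h1, h2⟩
        have h3 : f v i0 = μ := by
          rw [h2]
          simp [h1]
        exact ⟨⟨Finset.mem_univ _, h1, by rw [h3, h2]⟩, h3⟩
    -- the fiber is a coset of K
    have himg : (S.filter fun v => f v i0 = μ)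
        = Finset.image (fun w : ↥K => v₀ + ↑w) Finset.univ := by
      ext v
      rw [Finset.mem_image, hfibdesc v]
      constructor
      · rintro ⟨h1, h2⟩
        have hwK : v - v₀ ∈ K := by
          rw [hK]
          refine Submodule.mem_inf.mpr ⟨?_, ?_⟩
          · rw [Module.End.mem_eigenspace_iff, map_sub, h2, hv₀eig, smul_sub]
          · rw [LinearMap.mem_ker, LinearMap.proj_apply]
            simp [h1, hv₀1]
        exact ⟨⟨v - v₀, hwK⟩, Finset.mem_univ _, by simp⟩
      · rintro ⟨⟨w, hw⟩, -, rfl⟩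
        rw [hK] at hw
        obtain ⟨hw1, hw2⟩ := Submodule.mem_inf.mp hw
        rw [Module.End.mem_eigenspace_iff] at hw1
        rw [LinearMap.mem_ker, LinearMap.proj_apply] at hw2
        constructor
        · simp [hv₀1, hw2]
        · rw [map_add, hv₀eig, hw1, smul_add]
    have hcard : (S.filter fun v => f v i0 = μ).card = Fintype.card F ^ e μ := by
      rw [himg, Finset.card_image_of_injective _
        (fun w₁ w₂ h => Subtype.ext (by simpa using h)),
        Finset.card_univ, he μ, ← hK]
      exact card_eq_pow_finrank (K := F) (V := ↥K)
    -- dimension bounds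
    have hv₀E : v₀ ∈ f.eigenspace μ := Module.End.mem_eigenspace_iff.mpr hv₀eig
    have hv₀K : v₀ ∉ K := by
      rw [hK]
      intro h
      have := (Submodule.mem_inf.mp h).2
      rw [LinearMap.mem_ker, LinearMap.proj_apply, hv₀1] at this
      exact one_ne_zero this
    have hlt : K < f.eigenspace μ :=
      lt_of_le_of_ne (hKle μ) (fun h => hv₀K (h ▸ hv₀E))
    have hed : e μ < finrank F (f.eigenspace μ) := by
      rw [he μ, ← hK]
      exact Submodule.finrank_lt_finrank_of_lt hlt
    have hdn : finrank F (f.eigenspace μ) ≤ n - 1 := by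
      have hle' : finrank F (f.eigenspace μ) ≤ n :=
        le_trans (Submodule.finrank_le _) (le_of_eq hfrtop)
      rcases Nat.lt_or_ge (finrank F (f.eigenspace μ)) n with h | h
      · clear * - hle' h; omega
      · exfalso
        have htop : f.eigenspace μ = ⊤ :=
          Submodule.eq_top_of_finrank_eq (by clear * - hle' h hfrtop; omega)
        refine hφ ⟨μ, fun x => Module.End.mem_eigenspace_iff.mp ?_⟩
        rw [htop]
        exact Submodule.mem_top
    exact ⟨hcard, by clear * - hed hdn hn; omega, by clear * - hed; omega⟩
  -- sum of dimensions bound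
  have hdimsum : ∑ μ ∈ T, (e μ + 1) ≤ (n - 2) + 2 := by
    have h1 : ∑ μ ∈ T, (e μ + 1) ≤ ∑ μ ∈ T, finrank F (f.eigenspace μ) :=
      Finset.sum_le_sum (fun μ hμ => (hfiber μ hμ).2.2)
    have h2 := stmt14_sum_finrank_eigenspace_le f T
    rw [hfrtop] at h2
    clear * - h1 h2 hn; omega
  -- combine
  have hfinal : ∑ μ ∈ T, (S.filter fun v => f v i0 = μ).card
      ≤ Fintype.card F ^ (n - 2) + 1 := by
    have heq : ∑ μ ∈ T, (S.filter fun v => f v i0 = μ).card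
        = ∑ μ ∈ T, Fintype.card F ^ e μ :=
      Finset.sum_congr rfl (fun μ hμ => (hfiber μ hμ).1)
    rw [heq]
    exact stmt14_comb (Fintype.card F) (n - 2) hq T e
      (fun μ hμ => (hfiber μ hμ).2.1) hdimsum
  calc Nat.card _ ≤ S.card := stepA
    _ = _ := hsumT
    _ ≤ _ := hfinal
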